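/- arXiv:1812.10751 — 7 statements merged into one kernel-verified Lean document; each statement's English description precedes it below -/
import Mathlib

section
/- Let G be a locally compact topological group equipped with a right-invariant Haar measure μ, let τ be a continuous involutive automorphism of G with g* := τ(g)⁻¹, and let S ⊆ G be an open subsemigroup with S* = S. Let φ : S → ℂ be a continuous positive definite function, i.e. the kernel (s,t) ↦ φ(st*) on S × S is positive definite. Then for every continuous compactly supported function ψ : G → ℂ whose support is contained in S, the double integral ∫_S ∫_S conj(ψ(g)) · ψ(h) · φ(g h*) dμ(g) dμ(h) is a nonnegative real number. -/
open MeasureTheory Filter Set Topology Uniformity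

section Aux

variable {G : Type*} [Group G] [TopologicalSpace G] [IsTopologicalGroup G]
  [MeasurableSpace G] [BorelSpace G]

/-- Uniform continuity of a compactly supported continuous function on `G × G`,
phrased via group translations. -/
lemma aux_unifcont (Φ : G × G → ℂ) (hc : Continuous Φ) (hs : HasCompactSupport Φ)
    {ε : ℝ} (hε : 0 < ε) :
    ∃ U ∈ 𝓝 (1 : G), ∀ a b c d : G, b * a⁻¹ ∈ U → d * c⁻¹ ∈ U →
      dist (Φ (b, d)) (Φ (a, c)) ≤ ε := by
  letI : UniformSpace G := IsTopologicalGroup.rightUniformSpace G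
  have hUC : UniformContinuous Φ := hs.uniformContinuous_of_continuous hc
  have hW : {p : (G × G) × (G × G) | dist (Φ p.1) (Φ p.2) < ε} ∈ 𝓤 (G × G) :=
    hUC (Metric.dist_mem_uniformity hε)
  rw [uniformity_prod_eq_comap_prod] at hW
  obtain ⟨t, ht, hsub⟩ := Filter.mem_comap.mp hW
  obtain ⟨t₁, ht₁, t₂, ht₂, hts⟩ := Filter.mem_prod_iff.mp ht
  have h𝓤 : 𝓤 G = Filter.comap (fun p : G × G => p.2 / p.1) (𝓝 (1 : G)) := by
    simp_rw [div_eq_mul_inv]; rfl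
  rw [h𝓤] at ht₁ ht₂
  obtain ⟨U₁, hU₁, hU₁s⟩ := Filter.mem_comap.mp ht₁
  obtain ⟨U₂, hU₂, hU₂s⟩ := Filter.mem_comap.mp ht₂
  refine ⟨U₁ ∩ U₂, Filter.inter_mem hU₁ hU₂, ?_⟩
  intro a b c d hab hcd
  have h1 : ((a, c), (b, d)) ∈ (fun p : (G × G) × (G × G) =>
      ((p.1.1, p.2.1), (p.1.2, p.2.2))) ⁻¹' t := by
    apply hts
    constructor
    · apply hU₁s
      show b / a ∈ U₁
      rw [div_eq_mul_inv]
      exact hab.1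
    · apply hU₂s
      show d / c ∈ U₂
      rw [div_eq_mul_inv]
      exact hcd.2
  have := hsub h1
  simpa [dist_comm] using this.le

theorem aux_nonneg (μ : Measure G) [IsFiniteMeasureOnCompacts μ]
    (Φ : G × G → ℂ) (hc : Continuous Φ) (hs : HasCompactSupport Φ)
    (hpos : ∀ (n : ℕ) (x : Fin n → G) (c : Fin n → ℝ), (∀ i, 0 ≤ c i) →
      ∃ r : ℝ, 0 ≤ r ∧ ∑ j, ∑ k, (c j : ℂ) * (c k : ℂ) * Φ (x j, x k) = r) :
    ∃ r : ℝ, 0 ≤ r ∧ (∫ g, ∫ h, Φ (g, h) ∂μ ∂μ) = r := by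
  classical
  set K : Set G := closure (Prod.fst '' tsupport Φ ∪ Prod.snd '' tsupport Φ) with hKdef
  have hKco : IsCompact K := ((hs.image continuous_fst).union (hs.image continuous_snd)).closure
  have hKm : MeasurableSet K := isClosed_closure.measurableSet
  have hKfin : μ K < ⊤ := hKco.measure_lt_top
  have hΦK : ∀ p : G × G, Φ p ≠ 0 → p.1 ∈ K ∧ p.2 ∈ K := by
    intro p hp
    have hpt : p ∈ tsupport Φ := subset_tsupport Φ hp
    exact ⟨subset_closure (Or.inl ⟨p, hpt, rfl⟩), subset_closure (Or.inr ⟨p, hpt, rfl⟩)⟩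
  have hΦ1 : ∀ g h : G, g ∉ K → Φ (g, h) = 0 := by
    intro g h hg; by_contra h0; exact hg (hΦK _ h0).1
  have hΦ2 : ∀ g h : G, h ∉ K → Φ (g, h) = 0 := by
    intro g h hh; by_contra h0; exact hh (hΦK _ h0).2
  obtain ⟨p₀, hp₀⟩ : ∃ p₀ : G × G, ∀ p, ‖Φ p‖ ≤ ‖Φ p₀‖ :=
    hc.norm.exists_forall_ge_of_hasCompactSupport hs.norm
  set C : ℝ := ‖Φ p₀‖ with hCdef
  have hCb : ∀ p, ‖Φ p‖ ≤ C := hp₀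
  have hsec_int : ∀ g : G, Integrable (fun h => Φ (g, h)) μ := by
    intro g
    apply (hc.comp (Continuous.prodMk_right g)).integrable_of_hasCompactSupport
    exact HasCompactSupport.intro hKco (fun h hh => hΦ2 g h hh)
  -- continuity of parametrized set integrals, via uniform continuity
  have hJcont : ∀ s : Set G, μ s < ⊤ → Continuous (fun g => ∫ h in s, Φ (g, h) ∂μ) := by
    intro s hsfin
    rw [continuous_iff_continuousAt]
    intro g
    rw [ContinuousAt, Metric.tendsto_nhds]
    intro ε hε
    have hδ' : (0:ℝ) < ε / ((μ s).toReal + 1) := by positivity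
    obtain ⟨U, hU, hUc⟩ := aux_unifcont Φ hc hs hδ'
    have hW : {g' : G | g' * g⁻¹ ∈ U} ∈ 𝓝 g := by
      have hcont : ContinuousAt (fun x : G => x * g⁻¹) g :=
        (continuous_mul_right g⁻¹).continuousAt
      exact hcont.preimage_mem_nhds (by simpa using hU)
    filter_upwards [hW] with g' hg'
    rw [dist_eq_norm, ← integral_sub ((hsec_int g').integrableOn) ((hsec_int g).integrableOn)]
    calc ‖∫ h in s, (Φ (g', h) - Φ (g, h)) ∂μ‖
        ≤ (ε / ((μ s).toReal + 1)) * (μ s).toReal := by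
          refine norm_setIntegral_le_of_norm_le_const hsfin (fun h _ => ?_)
          have hd := hUc g g' h h hg' (by simpa using mem_of_mem_nhds hU)
          simpa [dist_eq_norm] using hd
      _ < ε := by
          have h1 : (μ s).toReal < (μ s).toReal + 1 := by linarith
          calc (ε / ((μ s).toReal + 1)) * (μ s).toReal
              < (ε / ((μ s).toReal + 1)) * ((μ s).toReal + 1) :=
                mul_lt_mul_of_pos_left h1 hδ'
            _ = ε := by field_simp
  set I : G → ℂ := fun g => ∫ h, Φ (g, h) ∂μ with hIdef
  have hI_eqK : I = fun g => ∫ h in K, Φ (g, h) ∂μ := funext fun g =>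
    (setIntegral_eq_integral_of_forall_compl_eq_zero (fun h hh => hΦ2 g h hh)).symm
  have hIc : Continuous I := hI_eqK ▸ hJcont K hKfin
  have hI0 : ∀ g, g ∉ K → I g = 0 := by
    intro g hg
    have h0 : ∀ h, Φ (g, h) = 0 := fun h => hΦ1 g h hg
    simp [hIdef, h0]
  have hIcs : HasCompactSupport I := HasCompactSupport.intro hKco hI0
  have hIint : Integrable I μ := hIc.integrable_of_hasCompactSupport hIcs
  set z : ℂ := ∫ g, I g ∂μ with hzdef
  have key : ∀ ε : ℝ, 0 < ε → ∃ r : ℝ, 0 ≤ r ∧ ‖z - r‖ ≤ ε := by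
    intro ε hε
    set M : ℝ := (μ K).toReal with hMdef
    have hM0 : (0:ℝ) ≤ M := ENNReal.toReal_nonneg
    set δ : ℝ := ε / (M ^ 2 + 1) with hδdef
    have hδ : 0 < δ := div_pos hε (by positivity)
    obtain ⟨U, hU, hUc⟩ := aux_unifcont Φ hc hs hδ
    obtain ⟨V₀, hV₀o, hV₀1, hV₀U⟩ := exists_open_nhds_one_mul_subset hU
    set V : Set G := V₀ ∩ V₀⁻¹ with hVdef
    have hVo : IsOpen V := hV₀o.inter hV₀o.inv
    have hV1 : (1 : G) ∈ V := ⟨hV₀1, by simpa using hV₀1⟩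
    have hVmul : ∀ a b : G, a ∈ V → b ∈ V → a * b⁻¹ ∈ U := by
      intro a b ha hb
      exact hV₀U (Set.mul_mem_mul ha.1 hb.2)
    have hcover : K ⊆ ⋃ x : G, {g : G | g * x⁻¹ ∈ V} := by
      intro g _
      exact mem_iUnion.mpr ⟨g, by simp [hV1]⟩
    obtain ⟨t, ht⟩ := hKco.elim_finite_subcover (fun x : G => {g : G | g * x⁻¹ ∈ V})
      (fun x => hVo.preimage (continuous_mul_right x⁻¹)) hcover
    set n : ℕ := t.card with hn
    set xi : Fin n → G := fun i => (t.equivFin.symm i : G) with hxi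
    set f : ℕ → Set G := fun k =>
      if hk : k < n then K ∩ {g : G | g * (xi ⟨k, hk⟩)⁻¹ ∈ V} else ∅ with hfdef
    set B : ℕ → Set G := disjointed f with hBdef
    have hfm : ∀ k, MeasurableSet (f k) := by
      intro k
      simp only [hfdef]
      split
      · exact hKm.inter ((hVo.preimage (continuous_mul_right _)).measurableSet)
      · exact MeasurableSet.empty
    have hBm : ∀ k, MeasurableSet (B k) := MeasurableSet.disjointed hfm
    have hBd : Pairwise (Function.onFun Disjoint B) := disjoint_disjointed f
    have hBf : ∀ k, B k ⊆ f k := disjointed_subset f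
    have hfK : ∀ k, f k ⊆ K := by
      intro k
      simp only [hfdef]
      split
      · exact inter_subset_left
      · exact empty_subset _
    have hBK : ∀ k, B k ⊆ K := fun k => (hBf k).trans (hfK k)
    have hKB : K = ⋃ k ∈ Finset.range n, B k := by
      apply Subset.antisymm
      · intro g hg
        have hgU : g ∈ ⋃ k, B k := by
          rw [hBdef, iUnion_disjointed]
          have := ht hg
          simp only [mem_iUnion, exists_prop] at this
          obtain ⟨x, hx, hgx⟩ := this
          refine mem_iUnion.mpr ⟨(t.equivFin ⟨x, hx⟩ : Fin n), ?_⟩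
          have hlt : ((t.equivFin ⟨x, hx⟩ : Fin n) : ℕ) < n := (t.equivFin ⟨x, hx⟩).isLt
          simp only [hfdef, dif_pos hlt]
          refine ⟨hg, ?_⟩
          have hxeq : xi ⟨((t.equivFin ⟨x, hx⟩ : Fin n) : ℕ), hlt⟩ = x := by
            simp only [hxi, Fin.eta, Equiv.symm_apply_apply]
          rw [hxeq]
          exact hgx
        obtain ⟨k, hk⟩ := mem_iUnion.mp hgU
        have hkn : k < n := by
          by_contra hkn
          have hfe : f k = ∅ := by simp [hfdef, hkn]
          exact absurd (hfe ▸ hBf k hk) (notMem_empty g)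
        exact mem_iUnion₂.mpr ⟨k, Finset.mem_range.mpr hkn, hk⟩
      · intro g hg
        obtain ⟨k, _, hk⟩ := mem_iUnion₂.mp hg
        exact hBK k hk
    have hBfin : ∀ k, μ (B k) < ⊤ := fun k =>
      lt_of_le_of_lt (measure_mono (hBK k)) hKfin
    set y : ℕ → G := fun k => if hk : (B k).Nonempty then hk.choose else 1 with hydef
    have hyB : ∀ k, (B k).Nonempty → y k ∈ B k := by
      intro k hk
      simp only [hydef, dif_pos hk]
      exact hk.choose_spec
    have hclose : ∀ k, ∀ g ∈ B k, g * (y k)⁻¹ ∈ U := by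
      intro k g hg
      have hne : (B k).Nonempty := ⟨g, hg⟩
      have h1 := hBf k hg
      have h2 := hBf k (hyB k hne)
      by_cases hk : k < n
      · simp only [hfdef, dif_pos hk] at h1 h2
        have heq : g * (y k)⁻¹ = (g * (xi ⟨k, hk⟩)⁻¹) * ((y k) * (xi ⟨k, hk⟩)⁻¹)⁻¹ := by
          group
        rw [heq]
        exact hVmul _ _ h1.2 h2.2
      · simp only [hfdef, dif_neg hk] at h1
        exact absurd h1 (notMem_empty g)
    set c : ℕ → ℝ := fun k => (μ (B k)).toReal with hcdef
    have hc0 : ∀ k, (0:ℝ) ≤ c k := fun k => ENNReal.toReal_nonneg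
    obtain ⟨r, hr0, hr⟩ := hpos n (fun i => y i) (fun i => c i) (fun i => hc0 i)
    refine ⟨r, hr0, ?_⟩
    rw [← hr]
    have hsum_eq : (∑ j : Fin n, ∑ k : Fin n,
        ((c j : ℂ) * (c k : ℂ) * Φ (y j, y k)))
        = ∑ j ∈ Finset.range n, ∑ k ∈ Finset.range n,
        ((c j : ℂ) * (c k : ℂ) * Φ (y j, y k)) := by
      rw [← Fin.sum_univ_eq_sum_range (fun j => ∑ k ∈ Finset.range n,
        ((c j : ℂ) * (c k : ℂ) * Φ (y j, y k))) n]
      refine Finset.sum_congr rfl fun j _ => ?_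
      rw [← Fin.sum_univ_eq_sum_range
        (fun k => ((c (j:ℕ) : ℂ) * (c k : ℂ) * Φ (y j, y k))) n]
    rw [hsum_eq]
    have hfinB : ∀ k, IsFiniteMeasure (μ.restrict (B k)) := by
      intro k
      constructor
      rw [Measure.restrict_apply_univ]
      exact hBfin k
    have hJint : ∀ j k : ℕ, IntegrableOn (fun g => ∫ h in B k, Φ (g, h) ∂μ) (B j) μ := by
      intro j k
      haveI := hfinB j
      refine Integrable.mono' (integrable_const (C * (μ (B k)).toReal))
        ((hJcont (B k) (hBfin k)).aestronglyMeasurable.restrict) ?_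
      refine Eventually.of_forall fun g => ?_
      exact norm_setIntegral_le_of_norm_le_const (hBfin k) (fun h _ => hCb (g, h))
    have hIeq : ∀ g : G, I g = ∑ k ∈ Finset.range n, ∫ h in B k, Φ (g, h) ∂μ := by
      intro g
      have h0 : I g = ∫ h in K, Φ (g, h) ∂μ :=
        (setIntegral_eq_integral_of_forall_compl_eq_zero (fun h hh => hΦ2 g h hh)).symm
      rw [h0, hKB]
      exact integral_biUnion_finset _ (fun i _ => hBm i) (hBd.set_pairwise _)
        (fun i _ => (hsec_int g).integrableOn)
    have hz1 : z = ∑ j ∈ Finset.range n, ∑ k ∈ Finset.range n,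
        ∫ g in B j, (∫ h in B k, Φ (g, h) ∂μ) ∂μ := by
      have h0 : z = ∫ g in K, I g ∂μ :=
        (setIntegral_eq_integral_of_forall_compl_eq_zero (fun g hg => hI0 g hg)).symm
      rw [h0, hKB, integral_biUnion_finset _ (fun i _ => hBm i) (hBd.set_pairwise _)
        (fun i _ => hIint.integrableOn)]
      refine Finset.sum_congr rfl fun j _ => ?_
      calc ∫ g in B j, I g ∂μ
          = ∫ g in B j, (∑ k ∈ Finset.range n, ∫ h in B k, Φ (g, h) ∂μ) ∂μ :=
            integral_congr_ae (Eventually.of_forall fun g => hIeq g)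
        _ = ∑ k ∈ Finset.range n, ∫ g in B j, (∫ h in B k, Φ (g, h) ∂μ) ∂μ :=
            integral_finset_sum _ (fun k _ => hJint j k)
    have hterm : ∀ j ∈ Finset.range n, ∀ k ∈ Finset.range n,
        ‖(∫ g in B j, (∫ h in B k, Φ (g, h) ∂μ) ∂μ)
          - (c j : ℂ) * (c k : ℂ) * Φ (y j, y k)‖ ≤ δ * (c j * c k) := by
      intro j _ k _
      haveI := hfinB j
      haveI := hfinB k
      have hconst : (c j : ℂ) * (c k : ℂ) * Φ (y j, y k)
          = ∫ _ in B j, ((c k : ℂ) * Φ (y j, y k)) ∂μ := by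
        rw [setIntegral_const, Complex.real_smul, measureReal_def]
        simp only [hcdef]
        ring
      rw [hconst, ← integral_sub (hJint j k) (integrable_const _)]
      have hbound : ∀ g ∈ B j,
          ‖(∫ h in B k, Φ (g, h) ∂μ) - (c k : ℂ) * Φ (y j, y k)‖ ≤ δ * c k := by
        intro g hg
        have h2 : (c k : ℂ) * Φ (y j, y k) = ∫ _ in B k, Φ (y j, y k) ∂μ := by
          rw [setIntegral_const, Complex.real_smul, measureReal_def]
        rw [h2, ← integral_sub ((hsec_int g).integrableOn) (integrable_const _)]
        refine (norm_setIntegral_le_of_norm_le_const (C := δ) (hBfin k)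
          (fun h hh => ?_)).trans_eq ?_
        · have hd := hUc (y j) g (y k) h (hclose j g hg) (hclose k h hh)
          simpa [dist_eq_norm] using hd
        · simp only [hcdef, measureReal_def]
      calc ‖∫ g in B j, ((∫ h in B k, Φ (g, h) ∂μ) - (c k : ℂ) * Φ (y j, y k)) ∂μ‖
          ≤ (δ * c k) * (μ (B j)).toReal :=
            norm_setIntegral_le_of_norm_le_const (hBfin j) hbound
        _ = δ * (c j * c k) := by simp only [hcdef]; ring
    have hMsum : ∑ j ∈ Finset.range n, c j = M := by
      have h1 : μ K = ∑ j ∈ Finset.range n, μ (B j) := by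
        rw [hKB]
        exact measure_biUnion_finset (hBd.set_pairwise _) (fun i _ => hBm i)
      simp only [hMdef, hcdef, h1]
      exact (ENNReal.toReal_sum (fun j _ => (hBfin j).ne)).symm
    calc ‖z - ∑ j ∈ Finset.range n, ∑ k ∈ Finset.range n,
            ((c j : ℂ) * (c k : ℂ) * Φ (y j, y k))‖
        = ‖∑ j ∈ Finset.range n, ∑ k ∈ Finset.range n,
            ((∫ g in B j, (∫ h in B k, Φ (g, h) ∂μ) ∂μ)
              - (c j : ℂ) * (c k : ℂ) * Φ (y j, y k))‖ := by
          rw [hz1, ← Finset.sum_sub_distrib]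
          congr 1
          refine Finset.sum_congr rfl fun j _ => ?_
          rw [← Finset.sum_sub_distrib]
      _ ≤ ∑ j ∈ Finset.range n, ∑ k ∈ Finset.range n, δ * (c j * c k) := by
          refine (norm_sum_le _ _).trans ?_
          refine Finset.sum_le_sum fun j hj => ?_
          refine (norm_sum_le _ _).trans ?_
          exact Finset.sum_le_sum fun k hk => hterm j hj k hk
      _ = δ * ((∑ j ∈ Finset.range n, c j) * (∑ k ∈ Finset.range n, c k)) := by
          rw [Finset.sum_mul_sum, Finset.mul_sum]
          refine Finset.sum_congr rfl fun j _ => ?_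
          rw [Finset.mul_sum]
      _ = δ * (M * M) := by rw [hMsum]
      _ ≤ δ * (M ^ 2 + 1) := by
          refine mul_le_mul_of_nonneg_left ?_ hδ.le
          nlinarith
      _ = ε := by
          rw [hδdef]
          field_simp
  have him : z.im = 0 := by
    have h1 : |z.im| ≤ 0 := by
      by_contra hlt
      push_neg at hlt
      obtain ⟨r, _, hrle⟩ := key (|z.im| / 2) (by linarith)
      have h2 : |z.im| ≤ |z.im| / 2 := by
        calc |z.im| = |(z - (r:ℂ)).im| := by simp
          _ ≤ ‖z - (r:ℂ)‖ := Complex.abs_im_le_norm _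
          _ = ‖z - (r:ℂ)‖ := rfl
          _ ≤ |z.im| / 2 := hrle
      linarith
    exact abs_nonpos_iff.mp h1
  have hre : 0 ≤ z.re := by
    by_contra hlt
    push_neg at hlt
    obtain ⟨r, hr0, hrle⟩ := key (-z.re / 2) (by linarith)
    have h2 : r - z.re ≤ -z.re / 2 := by
      calc r - z.re = ((r:ℂ) - z).re := by simp
        _ ≤ |((r:ℂ) - z).re| := le_abs_self _
        _ ≤ ‖(r:ℂ) - z‖ := Complex.abs_re_le_norm _
        _ = ‖z - (r:ℂ)‖ := by rw [norm_sub_rev]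
        _ ≤ -z.re / 2 := hrle
    linarith
  refine ⟨z.re, hre, ?_⟩
  have hzre : z = ((z.re : ℝ) : ℂ) := Complex.ext (by simp) (by simp [him])
  exact hzre
end Aux

/-- For a continuous positive definite function `φ` on an open
`*`-subsemigroup `S` of a locally compact group `G` with right-invariant Haar measure `μ`,
the double integral `∫∫ conj (ψ g) * ψ h * φ (g * (τ h)⁻¹)` over `S × S` is a nonnegative
real number, for every continuous compactly supported `ψ` with support in `S`. -/
theorem stmt_0 {G : Type*} [Group G] [TopologicalSpace G] [IsTopologicalGroup G]
    [LocallyCompactSpace G] [MeasurableSpace G] [BorelSpace G]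
    (μ : Measure G) [μ.IsMulRightInvariant] [IsFiniteMeasureOnCompacts μ]
    [μ.IsOpenPosMeasure]
    (τ : G →* G) (hτ_inv : Function.Involutive τ) (hτ_cont : Continuous τ)
    (S : Set G) (hS_open : IsOpen S)
    (hS_mul : ∀ a ∈ S, ∀ b ∈ S, a * b ∈ S)
    (hS_star : ∀ s ∈ S, (τ s)⁻¹ ∈ S)
    (φ : G → ℂ) (hφ_cont : ContinuousOn φ S)
    (hφ_pd : ∀ (n : ℕ) (x : Fin n → G), (∀ j, x j ∈ S) → ∀ lam : Fin n → ℂ,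
      ∃ r : ℝ, 0 ≤ r ∧
        ∑ j, ∑ k, lam j * (starRingEnd ℂ) (lam k) * φ (x j * (τ (x k))⁻¹) = r)
    (ψ : G → ℂ) (hψ_cont : Continuous ψ) (hψ_supp : HasCompactSupport ψ)
    (hψ_S : tsupport ψ ⊆ S) :
    ∃ r : ℝ, 0 ≤ r ∧
      (∫ g in S, ∫ h in S,
        (starRingEnd ℂ) (ψ g) * ψ h * φ (g * (τ h)⁻¹) ∂μ ∂μ) = r := by
  classical
  set Φ : G × G → ℂ := fun p => (starRingEnd ℂ) (ψ p.1) * ψ p.2 * φ (p.1 * (τ p.2)⁻¹)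
    with hΦdef
  have hψ0 : ∀ g, g ∉ S → ψ g = 0 := fun g hg =>
    image_eq_zero_of_notMem_tsupport (fun h => hg (hψ_S h))
  have hΦc : Continuous Φ := by
    rw [continuous_iff_continuousAt]
    intro p
    by_cases hp : p.1 ∈ S ∧ p.2 ∈ S
    · have hmem : p.1 * (τ p.2)⁻¹ ∈ S := hS_mul _ hp.1 _ (hS_star _ hp.2)
      have hm : ContinuousAt (fun q : G × G => q.1 * (τ q.2)⁻¹) p :=
        (continuous_fst.mul ((hτ_cont.comp continuous_snd).inv)).continuousAt
      have hφat : ContinuousAt φ (p.1 * (τ p.2)⁻¹) :=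
        hφ_cont.continuousAt (hS_open.mem_nhds hmem)
      show ContinuousAt (fun q : G × G =>
        (starRingEnd ℂ) (ψ q.1) * ψ q.2 * φ (q.1 * (τ q.2)⁻¹)) p
      exact ((continuous_star.comp (hψ_cont.comp continuous_fst)).continuousAt.mul
        (hψ_cont.comp continuous_snd).continuousAt).mul (ContinuousAt.comp (x := p) hφat hm)
    · have hns : p.1 ∉ tsupport ψ ∨ p.2 ∉ tsupport ψ := by
        by_contra hcon
        push_neg at hcon
        exact hp ⟨hψ_S hcon.1, hψ_S hcon.2⟩
      have hev : ∀ᶠ q : G × G in 𝓝 p, Φ q = 0 := by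
        rcases hns with h | h
        · have hopen : IsOpen ((fun q : G × G => q.1) ⁻¹' (tsupport ψ)ᶜ) :=
            (isClosed_tsupport ψ).isOpen_compl.preimage continuous_fst
          filter_upwards [hopen.mem_nhds h] with q hq
          simp [hΦdef, image_eq_zero_of_notMem_tsupport hq]
        · have hopen : IsOpen ((fun q : G × G => q.2) ⁻¹' (tsupport ψ)ᶜ) :=
            (isClosed_tsupport ψ).isOpen_compl.preimage continuous_snd
          filter_upwards [hopen.mem_nhds h] with q hq
          simp [hΦdef, image_eq_zero_of_notMem_tsupport hq]
      have heq : (fun _ : G × G => (0:ℂ)) =ᶠ[𝓝 p] Φ := hev.mono fun q hq => hq.symm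
      exact continuousAt_const.congr heq
  have hΦs : HasCompactSupport Φ := by
    apply HasCompactSupport.intro (hψ_supp.prod hψ_supp)
    intro p hp
    by_cases h1 : p.1 ∈ tsupport ψ
    · have h2 : p.2 ∉ tsupport ψ := fun h2 => hp ⟨h1, h2⟩
      simp [hΦdef, image_eq_zero_of_notMem_tsupport h2]
    · simp [hΦdef, image_eq_zero_of_notMem_tsupport h1]
  have hpos : ∀ (n : ℕ) (x : Fin n → G) (c : Fin n → ℝ), (∀ i, 0 ≤ c i) →
      ∃ r : ℝ, 0 ≤ r ∧ ∑ j, ∑ k, (c j : ℂ) * (c k : ℂ) * Φ (x j, x k) = r := by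
    intro n x c hc0
    by_cases hSne : S.Nonempty
    · obtain ⟨s₀, hs₀⟩ := hSne
      set x' : Fin n → G := fun i => if x i ∈ S then x i else s₀ with hx'def
      have hx'S : ∀ i, x' i ∈ S := by
        intro i
        simp only [hx'def]
        split
        · assumption
        · exact hs₀
      set lam : Fin n → ℂ := fun i =>
        if x i ∈ S then (c i : ℂ) * (starRingEnd ℂ) (ψ (x i)) else 0 with hlamdef
      obtain ⟨r, hr0, hr⟩ := hφ_pd n x' hx'S lam
      refine ⟨r, hr0, ?_⟩
      rw [← hr]
      refine Finset.sum_congr rfl fun j _ => Finset.sum_congr rfl fun k _ => ?_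
      by_cases hj : x j ∈ S
      · by_cases hk : x k ∈ S
        · simp only [hlamdef, hx'def, if_pos hj, if_pos hk, hΦdef]
          rw [map_mul, Complex.conj_conj, Complex.conj_ofReal]
          ring
        · have hz : ψ (x k) = 0 := hψ0 _ hk
          simp [hlamdef, hx'def, if_pos hj, if_neg hk, hΦdef, hz]
      · have hz : ψ (x j) = 0 := hψ0 _ hj
        simp [hlamdef, hx'def, if_neg hj, hΦdef, hz]
    · have hz : ∀ g, ψ g = 0 := fun g => hψ0 g (fun hg => hSne ⟨g, hg⟩)
      refine ⟨0, le_refl 0, ?_⟩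
      simp [hΦdef, hz]
  obtain ⟨r, hr0, hr⟩ := aux_nonneg μ Φ hΦc hΦs hpos
  refine ⟨r, hr0, ?_⟩
  rw [← hr]
  have hinner : ∀ g : G,
      (∫ h in S, (starRingEnd ℂ) (ψ g) * ψ h * φ (g * (τ h)⁻¹) ∂μ)
      = ∫ h, Φ (g, h) ∂μ := by
    intro g
    rw [setIntegral_eq_integral_of_forall_compl_eq_zero
      (fun h hh => by rw [hψ0 h hh]; ring)]
  calc ∫ g in S, ∫ h in S,
          (starRingEnd ℂ) (ψ g) * ψ h * φ (g * (τ h)⁻¹) ∂μ ∂μ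
      = ∫ g in S, ∫ h, Φ (g, h) ∂μ ∂μ :=
        integral_congr_ae (Eventually.of_forall fun g => hinner g)
    _ = ∫ g, ∫ h, Φ (g, h) ∂μ ∂μ := by
        refine setIntegral_eq_integral_of_forall_compl_eq_zero fun g hg => ?_
        have hz : ψ g = 0 := hψ0 g hg
        simp [hΦdef, hz]
end

section
/- Let G be a locally compact topological group with right-invariant Haar measure μ, τ a continuous involutive automorphism of G, g* := τ(g)⁻¹, and S ⊆ G an open *-subsemigroup. Let π : S → B(H) be a strongly continuous *-representation on a complex Hilbert space H and let v ∈ H be a cyclic vector, i.e. span{π(s)v : s ∈ S} is dense in H. For a continuous compactly supported ψ : G → ℂ with supp(ψ) ⊆ S define γ(ψ) := ∫_S ψ(s) π(s*) v dμ(s) (Bochner integral). Then the linear span of {γ(ψ) : ψ continuous with compact support in S} is dense in H. -/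
open MeasureTheory

/-- For a strongly continuous `*`-representation `π` of an open
`*`-subsemigroup `S` with cyclic vector `v`, the span of the vectors
`γ(ψ) = ∫_S ψ(s) • π(s*) v dμ(s)`, where `ψ` ranges over continuous compactly supported
functions with support in `S`, is dense in `H`. -/
theorem stmt_2 {G : Type*} [Group G] [TopologicalSpace G] [IsTopologicalGroup G]
    [LocallyCompactSpace G] [MeasurableSpace G] [BorelSpace G]
    (μ : Measure G) [μ.IsMulRightInvariant] [IsFiniteMeasureOnCompacts μ]
    [μ.IsOpenPosMeasure]
    {H : Type*} [NormedAddCommGroup H] [InnerProductSpace ℂ H] [CompleteSpace H]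
    (τ : G →* G) (hτ_inv : Function.Involutive τ) (hτ_cont : Continuous τ)
    (S : Set G) (hS_open : IsOpen S)
    (hS_mul : ∀ a ∈ S, ∀ b ∈ S, a * b ∈ S)
    (hS_star : ∀ s ∈ S, (τ s)⁻¹ ∈ S)
    (π : G → H →L[ℂ] H)
    (hπ_mul : ∀ a ∈ S, ∀ b ∈ S, π (a * b) = π a ∘L π b)
    (hπ_star : ∀ s ∈ S, π ((τ s)⁻¹) = ContinuousLinearMap.adjoint (π s))
    (hπ_cont : ∀ v : H, ContinuousOn (fun s => (π s) v) S)
    (v : H)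
    (hcyc : Dense (↑(Submodule.span ℂ {w : H | ∃ s ∈ S, w = (π s) v}) : Set H)) :
    Dense (↑(Submodule.span ℂ
      {w : H | ∃ ψ : G → ℂ, Continuous ψ ∧ HasCompactSupport ψ ∧ tsupport ψ ⊆ S ∧
        w = ∫ s in S, ψ s • (π ((τ s)⁻¹)) v ∂μ}) : Set H) := by
  set f : G → H := fun s => (π ((τ s)⁻¹)) v with hf
  set Γ : Set H := {w : H | ∃ ψ : G → ℂ, Continuous ψ ∧ HasCompactSupport ψ ∧ tsupport ψ ⊆ S ∧
        w = ∫ s in S, ψ s • (π ((τ s)⁻¹)) v ∂μ} with hΓ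
  -- continuity of f on S
  have hfc : ContinuousOn f S := by
    refine (hπ_cont v).comp ((hτ_cont.inv).continuousOn) ?_
    intro s hs
    exact hS_star s hs
  -- key claim : every π t v lies in the closure of the span of Γ
  have key : ∀ t ∈ S, (π t) v ∈ closure ((Submodule.span ℂ Γ : Submodule ℂ H) : Set H) := by
    intro t ht
    rw [Metric.mem_closure_iff]
    intro ε hε
    set s₀ : G := (τ t)⁻¹ with hs₀def
    have hs₀ : s₀ ∈ S := hS_star t ht
    have hfs₀ : f s₀ = (π t) v := by
      simp only [hf, hs₀def, map_inv, hτ_inv t, inv_inv]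
    set ε' : ℝ := ε / 2 with hε'def
    have hε' : 0 < ε' := by positivity
    -- find an open neighborhood U of s₀ inside S where f is ε'-close to f s₀
    have hca : ContinuousAt f s₀ := hfc.continuousAt (hS_open.mem_nhds hs₀)
    have hball : f ⁻¹' Metric.ball (f s₀) ε' ∈ nhds s₀ :=
      hca (Metric.ball_mem_nhds (f s₀) hε')
    have hnb : f ⁻¹' Metric.ball (f s₀) ε' ∩ S ∈ nhds s₀ :=
      Filter.inter_mem hball (hS_open.mem_nhds hs₀)
    obtain ⟨U, hUsub, hUopen, hs₀U⟩ := mem_nhds_iff.mp hnb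
    have hUS : U ⊆ S := fun x hx => (hUsub hx).2
    have hUclose : ∀ x ∈ U, ‖f x - f s₀‖ < ε' := by
      intro x hx
      have := (hUsub hx).1
      simpa [Metric.mem_ball, dist_eq_norm] using this
    -- a compact closed set k between {s₀} and U
    obtain ⟨k, k_comp, k_closed, hk1, hk2⟩ :=
      exists_compact_closed_between isCompact_singleton hUopen
        (Set.singleton_subset_iff.mpr hs₀U)
    have hs₀k : s₀ ∈ interior k := hk1 rfl
    -- Urysohn bump function
    obtain ⟨ψ₀, hψ₀1, hψ₀0, hψ₀cs, hψ₀mem⟩ :=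
      exists_continuous_one_zero_of_isCompact isCompact_singleton
        isOpen_interior.isClosed_compl
        (Set.disjoint_left.mpr (by rintro x rfl; simpa using hs₀k))
    have hψ₀nonneg : ∀ x, 0 ≤ ψ₀ x := fun x => (hψ₀mem x).1
    have hsupp : Function.support ψ₀ ⊆ interior k := by
      intro x hx
      by_contra hxk
      exact hx (hψ₀0 hxk)
    have hψ₀supp : tsupport ψ₀ ⊆ U :=
      (closure_minimal (hsupp.trans interior_subset) k_closed).trans hk2
    have hψ₀suppS : tsupport ψ₀ ⊆ S := hψ₀supp.trans hUS
    -- the total mass is positive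
    have hψ₀int : Integrable (fun x => ψ₀ x) μ :=
      ψ₀.continuous.integrable_of_hasCompactSupport hψ₀cs
    set c : ℝ := ∫ x, ψ₀ x ∂μ with hcdef
    have hc : 0 < c := by
      rw [hcdef, integral_pos_iff_support_of_nonneg hψ₀nonneg hψ₀int]
      have hopen : IsOpen {x | 0 < ψ₀ x} := isOpen_lt continuous_const ψ₀.continuous
      have hsub : {x | 0 < ψ₀ x} ⊆ Function.support ψ₀ := fun x hx => ne_of_gt hx
      have hne : s₀ ∈ {x | 0 < ψ₀ x} := by
        have := hψ₀1 (Set.mem_singleton s₀)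
        simp only [Set.mem_setOf_eq]
        rw [this]; norm_num
      calc (0 : ENNReal) < μ {x | 0 < ψ₀ x} := hopen.measure_pos μ ⟨s₀, hne⟩
        _ ≤ μ (Function.support ψ₀) := measure_mono hsub
    -- the normalized real bump and its complexification
    set φ : G → ℝ := fun s => c⁻¹ * ψ₀ s with hφdef
    have hφcont : Continuous φ := continuous_const.mul ψ₀.continuous
    have hφsupp : Function.support φ ⊆ Function.support ψ₀ := by
      intro x hx
      simp only [Function.mem_support, hφdef] at hx ⊢
      intro h; exact hx (by rw [h, mul_zero])
    have hφcs : HasCompactSupport φ := hψ₀cs.mono hφsupp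
    have hφnonneg : ∀ x, 0 ≤ φ x := fun x =>
      mul_nonneg (inv_nonneg.mpr hc.le) (hψ₀nonneg x)
    set ψ : G → ℂ := fun s => ((φ s : ℝ) : ℂ) with hψdef
    have hψcont : Continuous ψ := Complex.continuous_ofReal.comp hφcont
    have hψsupp : Function.support ψ ⊆ Function.support φ := by
      intro x hx
      simp only [Function.mem_support, hψdef] at hx ⊢
      intro h; exact hx (by rw [h]; norm_num)
    have hψcs : HasCompactSupport ψ := hφcs.mono hψsupp
    have hψsuppS : tsupport ψ ⊆ S :=
      (closure_mono (hψsupp.trans hφsupp)).trans hψ₀suppS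
    -- integrability facts
    have hφint : Integrable φ μ := hφcont.integrable_of_hasCompactSupport hφcs
    have hφfs₀int : IntegrableOn (fun s => φ s • f s₀) S μ :=
      (hφint.smul_const (f s₀)).integrableOn
    have hhcont : Continuous (fun s => φ s • f s) := by
      rw [continuous_iff_continuousAt]
      intro x
      by_cases hx : x ∈ S
      · exact ((hφcont.continuousAt).smul (hfc.continuousAt (hS_open.mem_nhds hx)))
      · have hxk : x ∉ tsupport ψ₀ := fun h => hx (hψ₀suppS h)
        have hnhd : (tsupport ψ₀)ᶜ ∈ nhds x :=
          (isClosed_tsupport ψ₀).isOpen_compl.mem_nhds hxk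
        have : ∀ᶠ y in nhds x, φ y • f y = 0 := by
          filter_upwards [hnhd] with y hy
          have : ψ₀ y = 0 := image_eq_zero_of_notMem_tsupport hy
          simp [hφdef, this]
        exact ContinuousAt.congr (continuousAt_const (y := (0 : H)))
          (by filter_upwards [this] with y hy using hy.symm)
    have hhcs : HasCompactSupport (fun s => φ s • f s) := by
      apply hφcs.mono
      intro x hx
      simp only [Function.mem_support] at hx ⊢
      intro h; exact hx (by rw [h, zero_smul])
    have hhint : Integrable (fun s => φ s • f s) μ :=
      hhcont.integrable_of_hasCompactSupport hhcs
    have hhintS : IntegrableOn (fun s => φ s • f s) S μ := hhint.integrableOn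
    -- total mass of φ over S is 1
    have hφS : ∫ s in S, φ s ∂μ = 1 := by
      have h0 : ∀ x, x ∉ S → φ x = 0 := by
        intro x hx
        have hxk : x ∉ tsupport ψ₀ := fun h => hx (hψ₀suppS h)
        have : ψ₀ x = 0 := image_eq_zero_of_notMem_tsupport hxk
        simp [hφdef, this]
      rw [setIntegral_eq_integral_of_forall_compl_eq_zero h0, hφdef]
      simp only []
      rw [integral_const_mul]
      exact inv_mul_cancel₀ hc.ne'
    -- the candidate vector
    set w : H := ∫ s in S, ψ s • f s ∂μ with hwdef
    have hwΓ : w ∈ Γ := ⟨ψ, hψcont, hψcs, hψsuppS, rfl⟩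
    refine ⟨w, Submodule.subset_span hwΓ, ?_⟩
    -- rewrite w with real scalars
    have hwreal : w = ∫ s in S, φ s • f s ∂μ := by
      rw [hwdef]
      exact integral_congr_ae (Filter.Eventually.of_forall fun s => Complex.coe_smul (φ s) (f s))
    -- the difference estimate
    have hsub : w - (π t) v = ∫ s in S, (φ s • f s - φ s • f s₀) ∂μ := by
      rw [integral_sub hhintS hφfs₀int, ← hwreal, ← hfs₀]
      congr 1
      rw [integral_smul_const, hφS, one_smul]
    have hbound : ‖w - (π t) v‖ ≤ ε' := by
      rw [hsub]
      calc ‖∫ s in S, (φ s • f s - φ s • f s₀) ∂μ‖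
          ≤ ∫ s in S, ‖φ s • f s - φ s • f s₀‖ ∂μ :=
            norm_integral_le_integral_norm _
        _ ≤ ∫ s in S, φ s * ε' ∂μ := by
            apply setIntegral_mono_on ((hhintS.sub hφfs₀int).norm)
              ((hφint.mul_const ε').integrableOn) hS_open.measurableSet
            intro x hx
            simp only [Pi.sub_apply]
            rw [← smul_sub, norm_smul, Real.norm_eq_abs, abs_of_nonneg (hφnonneg x)]
            by_cases hx0 : φ x = 0
            · simp [hx0]
            · have hxs : x ∈ Function.support ψ₀ := hφsupp hx0
              have hxU : x ∈ U := hψ₀supp (subset_closure hxs)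
              exact mul_le_mul_of_nonneg_left (hUclose x hxU).le (hφnonneg x)
        _ = ε' := by rw [integral_mul_const, hφS, one_mul]
    rw [dist_eq_norm, ← norm_neg, neg_sub]
    calc ‖w - (π t) v‖ ≤ ε' := hbound
      _ < ε := by rw [hε'def]; linarith
  -- conclude density
  have hsub : (↑(Submodule.span ℂ {w : H | ∃ s ∈ S, w = (π s) v}) : Set H) ⊆
      closure ((Submodule.span ℂ Γ : Submodule ℂ H) : Set H) := by
    have hle : Submodule.span ℂ {w : H | ∃ s ∈ S, w = (π s) v} ≤
        (Submodule.span ℂ Γ).topologicalClosure := by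
      rw [Submodule.span_le]
      rintro w ⟨s, hs, rfl⟩
      exact key s hs
    exact fun x hx => hle hx
  have : Dense (closure ((Submodule.span ℂ Γ : Submodule ℂ H) : Set H)) :=
    hcyc.mono hsub
  exact Dense.of_closure this
end

section
/- Let G be a group with an involutive automorphism τ, g* := τ(g)⁻¹, S ⊆ G a *-subsemigroup, and π : S → B(H) a *-representation on a complex Hilbert space H. Let h ∈ G satisfy τ(h) = h, and set S_h := {s ∈ S : h s ∈ S}. Suppose that span{π(s)v : s ∈ S_h, v ∈ H} and span{π(h s)v : s ∈ S_h, v ∈ H} are both dense in H. Then there exists a unique unitary operator U on H such that π(h s) = U ∘ π(s) for all s ∈ S_h. -/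
/-- For a `*`-representation `π` of a `*`-subsemigroup `S ⊆ G` and a
`τ`-fixed element `h` such that `π(S_h)H` and `π(h S_h)H` span dense subspaces of `H`,
there is a unique unitary `U` on `H` with `π(hs) = U ∘ π(s)` for all `s ∈ S_h`. -/
theorem stmt_5 {G : Type*} [Group G]
    {H : Type*} [NormedAddCommGroup H] [InnerProductSpace ℂ H] [CompleteSpace H]
    (τ : G →* G) (hτ_inv : Function.Involutive τ)
    (S : Set G)
    (hS_mul : ∀ a ∈ S, ∀ b ∈ S, a * b ∈ S)
    (hS_star : ∀ s ∈ S, (τ s)⁻¹ ∈ S)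
    (π : G → H →L[ℂ] H)
    (hπ_mul : ∀ a ∈ S, ∀ b ∈ S, π (a * b) = π a ∘L π b)
    (hπ_star : ∀ s ∈ S, π ((τ s)⁻¹) = ContinuousLinearMap.adjoint (π s))
    (h : G) (hh : τ h = h)
    (hdense₁ : Dense (↑(Submodule.span ℂ
      {w : H | ∃ s ∈ S, h * s ∈ S ∧ ∃ x : H, w = (π s) x}) : Set H))
    (hdense₂ : Dense (↑(Submodule.span ℂ
      {w : H | ∃ s ∈ S, h * s ∈ S ∧ ∃ x : H, w = (π (h * s)) x}) : Set H)) :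
    ∃ U : H →L[ℂ] H, U ∈ unitary (H →L[ℂ] H) ∧
      (∀ s ∈ S, h * s ∈ S → π (h * s) = U ∘L π s) ∧
      ∀ U' : H →L[ℂ] H, U' ∈ unitary (H →L[ℂ] H) →
        (∀ s ∈ S, h * s ∈ S → π (h * s) = U' ∘L π s) → U' = U := by
  classical
  set A : Set H := {w : H | ∃ s ∈ S, h * s ∈ S ∧ ∃ x : H, w = (π s) x} with hA
  set B : Set H := {w : H | ∃ s ∈ S, h * s ∈ S ∧ ∃ x : H, w = (π (h * s)) x} with hB
  -- Key inner product identity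
  have key : ∀ s ∈ S, h * s ∈ S → ∀ t ∈ S, h * t ∈ S → ∀ v w : H,
      (inner ℂ (π (h * s) v) (π (h * t) w) : ℂ) = inner ℂ (π s v) (π t w) := by
    intro s hs hhs t ht hht v w
    have e1 : (inner ℂ (π (h * s) v) (π (h * t) w) : ℂ)
        = inner ℂ v ((ContinuousLinearMap.adjoint (π (h * s))) (π (h * t) w)) :=
      (ContinuousLinearMap.adjoint_inner_right _ _ _).symm
    have e2 : (inner ℂ (π s v) (π t w) : ℂ)
        = inner ℂ v ((ContinuousLinearMap.adjoint (π s)) (π t w)) :=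
      (ContinuousLinearMap.adjoint_inner_right _ _ _).symm
    rw [e1, e2, ← hπ_star _ hhs, ← hπ_star _ hs,
      ← ContinuousLinearMap.comp_apply, ← ContinuousLinearMap.comp_apply,
      ← hπ_mul _ (hS_star _ hhs) _ hht, ← hπ_mul _ (hS_star _ hs) _ ht]
    have hg : (τ (h * s))⁻¹ * (h * t) = (τ s)⁻¹ * t := by
      rw [map_mul, hh, mul_inv_rev]
      group
    rw [hg]
  -- well-definedness
  have keysub : ∀ s ∈ S, h * s ∈ S → ∀ t ∈ S, h * t ∈ S → ∀ v w : H,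
      π s v = π t w → π (h * s) v = π (h * t) w := by
    intro s hs hhs t ht hht v w hvw
    have hz : (inner ℂ (π (h * s) v - π (h * t) w) (π (h * s) v - π (h * t) w) : ℂ) = 0 := by
      simp only [inner_sub_left, inner_sub_right,
        key s hs hhs s hs hhs, key s hs hhs t ht hht,
        key t ht hht s hs hhs, key t ht hht t ht hht, hvw]
      ring
    rw [← sub_eq_zero]
    exact inner_self_eq_zero.mp hz
  -- a choice function on A sending π s x to π (h*s) x
  have hAphi : ∀ a : A, ∃ w : H, ∀ s ∈ S, h * s ∈ S → ∀ x : H, (a : H) = π s x →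
      w = π (h * s) x := by
    rintro ⟨a, s, hs, hhs, x, rfl⟩
    exact ⟨π (h * s) x, fun t ht hht y hy => keysub s hs hhs t ht hht x y hy⟩
  choose φ hφ using hAphi
  have hφ_gen : ∀ s (hs : s ∈ S) (hhs : h * s ∈ S) (x : H) (hmem : π s x ∈ A),
      φ ⟨π s x, hmem⟩ = π (h * s) x := fun s hs hhs x hmem =>
    hφ ⟨π s x, hmem⟩ s hs hhs x rfl
  have hφ_inner : ∀ a b : A, (inner ℂ (φ a) (φ b) : ℂ) = inner ℂ (a : H) (b : H) := by
    rintro ⟨a, ha⟩ ⟨b, hb⟩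
    obtain ⟨s, hs, hhs, x, hax⟩ := ha
    obtain ⟨t, ht, hht, y, hby⟩ := hb
    have h1 : φ ⟨a, ⟨s, hs, hhs, x, hax⟩⟩ = π (h * s) x := by
      subst hax; exact hφ_gen s hs hhs x _
    have h2 : φ ⟨b, ⟨t, ht, hht, y, hby⟩⟩ = π (h * t) y := by
      subst hby; exact hφ_gen t ht hht y _
    rw [h1, h2, key s hs hhs t ht hht, ← hax, ← hby]
  -- the linear maps out of finsupps
  set F : (A →₀ ℂ) →ₗ[ℂ] H := Finsupp.linearCombination ℂ φ with hF
  set T : (A →₀ ℂ) →ₗ[ℂ] H := Finsupp.linearCombination ℂ ((↑) : A → H) with hT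
  have hFT : ∀ l l' : A →₀ ℂ, (inner ℂ (F l) (F l') : ℂ) = inner ℂ (T l) (T l') := by
    intro l l'
    simp only [hF, hT, Finsupp.linearCombination_apply, Finsupp.sum, sum_inner, inner_sum,
      inner_smul_left, inner_smul_right, hφ_inner]
  have hker : LinearMap.ker T ≤ LinearMap.ker F := by
    intro l hl
    rw [LinearMap.mem_ker] at hl ⊢
    have : (inner ℂ (F l) (F l) : ℂ) = 0 := by rw [hFT, hl]; simp
    exact inner_self_eq_zero.mp this
  set M : Submodule ℂ H := Submodule.span ℂ A with hM
  have hMT : M = LinearMap.range T := Finsupp.span_eq_range_linearCombination ℂ A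
  -- the induced map on M
  set u : M →ₗ[ℂ] H :=
    ((LinearMap.ker T).liftQ F hker) ∘ₗ
      ((T.quotKerEquivRange.symm : LinearMap.range T →ₗ[ℂ] (A →₀ ℂ) ⧸ LinearMap.ker T) ∘ₗ
        (LinearEquiv.ofEq M (LinearMap.range T) hMT : M →ₗ[ℂ] LinearMap.range T)) with hu_def
  have hu : ∀ (l : A →₀ ℂ) (hm : T l ∈ M), u ⟨T l, hm⟩ = F l := by
    intro l hm
    have h1 : (LinearEquiv.ofEq M (LinearMap.range T) hMT) ⟨T l, hm⟩
        = ⟨T l, ⟨l, rfl⟩⟩ := rfl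
    show ((LinearMap.ker T).liftQ F hker)
      ((T.quotKerEquivRange.symm) ((LinearEquiv.ofEq M (LinearMap.range T) hMT) ⟨T l, hm⟩)) = F l
    rw [h1, T.quotKerEquivRange_symm_apply_image l ⟨l, rfl⟩]
    simp [Submodule.liftQ_apply]
  have hu' : ∀ x : M, ∃ l : A →₀ ℂ, (x : H) = T l ∧ u x = F l := by
    rintro ⟨xv, hxv⟩
    obtain ⟨l, hl⟩ := (hMT ▸ hxv : xv ∈ LinearMap.range T)
    refine ⟨l, hl.symm, ?_⟩
    have : (⟨xv, hxv⟩ : M) = ⟨T l, hl ▸ hxv⟩ := Subtype.ext hl.symm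
    rw [this, hu l _]
  have hu_inner : ∀ x y : M, (inner ℂ (u x) (u y) : ℂ) = inner ℂ (x : H) (y : H) := by
    intro x y
    obtain ⟨l, hl, hul⟩ := hu' x
    obtain ⟨l', hl', hul'⟩ := hu' y
    rw [hul, hul', hFT, hl, hl']
  -- the isometry on M and its extension U
  set uIso : M →ₗᵢ[ℂ] H := u.isometryOfInner (fun x y => by
    simpa using hu_inner x y) with huIso
  have hd : DenseRange (M.subtypeL : M →L[ℂ] H) := by
    have hr : Set.range (M.subtypeL : M →L[ℂ] H) = (M : Set H) := Subtype.range_coe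
    rw [DenseRange, hr]
    exact hdense₁
  have hui : IsUniformInducing (M.subtypeL : M →L[ℂ] H) :=
    isometry_subtype_coe.isUniformInducing
  set U : H →L[ℂ] H := uIso.toContinuousLinearMap.extend M.subtypeL with hU
  have hUm : ∀ x : M, U (x : H) = u x := fun x =>
    ContinuousLinearMap.extend_eq _ hd hui x
  have hU_on_A : ∀ s ∈ S, h * s ∈ S → ∀ x : H, U (π s x) = π (h * s) x := by
    intro s hs hhs x
    have hmem : π s x ∈ A := ⟨s, hs, hhs, x, rfl⟩
    have hmemM : π s x ∈ M := Submodule.subset_span hmem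
    have h1 : U (π s x) = u ⟨π s x, hmemM⟩ := hUm ⟨π s x, hmemM⟩
    set a : A := ⟨π s x, hmem⟩ with ha
    have hTl : T (Finsupp.single a 1) = π s x := by
      simp [hT, Finsupp.linearCombination_single, ha]
    have h2 : (⟨π s x, hmemM⟩ : M) = ⟨T (Finsupp.single a 1), hTl ▸ hmemM⟩ :=
      Subtype.ext hTl.symm
    rw [h1, h2, hu]
    simp [hF, Finsupp.linearCombination_single, ha, hφ_gen s hs hhs x hmem]
  -- U is a surjective isometry
  have hUnorm : ∀ y : H, ‖U y‖ = ‖y‖ := by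
    have hcl : IsClosed {y : H | ‖U y‖ = ‖y‖} :=
      isClosed_eq (continuous_norm.comp U.continuous) continuous_norm
    have hsub : (M : Set H) ⊆ {y : H | ‖U y‖ = ‖y‖} := by
      intro y hy
      have := hUm ⟨y, hy⟩
      simp only [Set.mem_setOf_eq, this]
      have := uIso.norm_map ⟨y, hy⟩
      simpa [huIso] using this
    intro y
    have hy : y ∈ closure (M : Set H) := hdense₁ y
    exact (hcl.closure_subset_iff.mpr hsub) hy
  have hUli : Isometry U := AddMonoidHomClass.isometry_of_norm U hUnorm
  have hUsurj : Function.Surjective U := by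
    have hclosed : IsClosed (Set.range U) := hUli.isClosedEmbedding.isClosed_range
    have hBsub : B ⊆ Set.range U := by
      rintro w ⟨s, hs, hhs, x, rfl⟩
      exact ⟨π s x, hU_on_A s hs hhs x⟩
    have hspan : (Submodule.span ℂ B : Set H) ⊆ Set.range U := by
      have : Submodule.span ℂ B ≤ LinearMap.range (U : H →ₗ[ℂ] H) :=
        Submodule.span_le.mpr hBsub
      exact this
    intro y
    have hy : y ∈ closure (↑(Submodule.span ℂ B) : Set H) := hdense₂ y
    exact (hclosed.closure_subset_iff.mpr hspan) hy
  -- unitarity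
  have hadj : ContinuousLinearMap.adjoint U ∘L U = 1 :=
    (ContinuousLinearMap.norm_map_iff_adjoint_comp_self U).mp hUnorm
  have hadj_pt : ∀ x : H, ContinuousLinearMap.adjoint U (U x) = x := by
    intro x
    have := congrArg (fun T => T x) hadj
    simpa using this
  have hUunit : U ∈ unitary (H →L[ℂ] H) := by
    rw [Unitary.mem_iff, ContinuousLinearMap.star_eq_adjoint]
    constructor
    · ext x
      simpa using hadj_pt x
    · ext y
      obtain ⟨x, rfl⟩ := hUsurj y
      simp [ContinuousLinearMap.mul_apply, hadj_pt x]
  refine ⟨U, hUunit, ?_, ?_⟩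
  · intro s hs hhs
    ext x
    exact (hU_on_A s hs hhs x).symm
  · intro U' _ hU'
    have hK0 : ∀ w ∈ A, (U' - U) w = 0 := by
      rintro w ⟨s, hs, hhs, x, rfl⟩
      have h1 : U' (π s x) = π (h * s) x := by
        rw [hU' s hs hhs]; rfl
      simp [ContinuousLinearMap.sub_apply, h1, hU_on_A s hs hhs x]
    have hspan : (M : Set H) ⊆ ((LinearMap.ker ((U' - U : H →L[ℂ] H) : H →ₗ[ℂ] H) : Submodule ℂ H) : Set H) := by
      have : Submodule.span ℂ A ≤ LinearMap.ker ((U' - U : H →L[ℂ] H) : H →ₗ[ℂ] H) := by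
        refine Submodule.span_le.mpr fun w hw => ?_
        exact LinearMap.mem_ker.mpr (hK0 w hw)
      exact this
    have hclosed : IsClosed ((LinearMap.ker ((U' - U : H →L[ℂ] H) : H →ₗ[ℂ] H) : Submodule ℂ H) : Set H) :=
      ContinuousLinearMap.isClosed_ker (U' - U)
    ext y
    have hy : y ∈ closure (M : Set H) := hdense₁ y
    have : y ∈ ((LinearMap.ker ((U' - U : H →L[ℂ] H) : H →ₗ[ℂ] H) : Submodule ℂ H) : Set H) :=
      (hclosed.closure_subset_iff.mpr hspan) hy
    have hz : (U' - U) y = 0 := this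
    have := sub_eq_zero.mp (by simpa [ContinuousLinearMap.sub_apply] using hz)
    exact this
end

section
/- Let G be a topological group with a continuous involutive automorphism τ, g* := τ(g)⁻¹, S ⊆ G an open *-subsemigroup, and π : S → B(H) a strongly continuous *-representation on a complex Hilbert space H. Let V ⊆ G be a symmetric set (V⁻¹ = V) consisting of τ-fixed elements such that span{π(s)v : s ∈ S_V, v ∈ H} is dense in H, where S_V := {s ∈ S : ∀h ∈ V, hs ∈ S}. Then there exists a map π^H : V → U(H) into the unitary group of H such that: (i) π(h s) = π^H(h) ∘ π(s) for all h ∈ V and all s ∈ S with hs ∈ S; (ii) h ↦ π^H(h)v is continuous on V for every v ∈ H; (iii) π^H(g) ∘ π^H(h) = π^H(gh) whenever g, h, gh ∈ V; (iv) π^H(g)* = π^H(g⁻¹) for all g ∈ V. Moreover π^H is uniquely determined by property (i). -/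
private lemma stmt6_inner_lc {ι E : Type*} [NormedAddCommGroup E] [InnerProductSpace ℂ E]
    (α β : ι → E) (hab : ∀ i j, (inner ℂ (β i) (β j) : ℂ) = inner ℂ (α i) (α j))
    (l l' : ι →₀ ℂ) :
    (inner ℂ (Finsupp.linearCombination ℂ β l) (Finsupp.linearCombination ℂ β l') : ℂ) =
      inner ℂ (Finsupp.linearCombination ℂ α l) (Finsupp.linearCombination ℂ α l') := by
  classical
  simp only [Finsupp.linearCombination_apply, Finsupp.sum, sum_inner, inner_sum,
    inner_smul_left, inner_smul_right]
  simp only [hab]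

private lemma stmt6_exists_ext {ι E : Type*} [NormedAddCommGroup E] [InnerProductSpace ℂ E]
    [CompleteSpace E] (α β : ι → E)
    (hab : ∀ i j, (inner ℂ (β i) (β j) : ℂ) = inner ℂ (α i) (α j))
    (hdense : Dense (Submodule.span ℂ (Set.range α) : Set E)) :
    ∃ U : E →L[ℂ] E, (∀ i, U (α i) = β i) ∧ ∀ w, ‖U w‖ = ‖w‖ := by
  classical
  set A := Finsupp.linearCombination ℂ α with hA
  set B := Finsupp.linearCombination ℂ β with hB
  have hnorm : ∀ l, ‖B l‖ = ‖A l‖ := by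
    intro l
    have h1 := stmt6_inner_lc α β hab l l
    have h2 : ‖B l‖ * ‖B l‖ = ‖A l‖ * ‖A l‖ := by
      rw [← @inner_self_eq_norm_mul_norm ℂ, ← @inner_self_eq_norm_mul_norm ℂ, h1]
    nlinarith [norm_nonneg (B l), norm_nonneg (A l)]
  have hker : LinearMap.ker A ≤ LinearMap.ker B := by
    intro l hl
    rw [LinearMap.mem_ker] at hl ⊢
    have h := hnorm l
    rw [hl, norm_zero, norm_eq_zero] at h
    exact h
  set T0 : ((ι →₀ ℂ) ⧸ LinearMap.ker A) →ₗ[ℂ] E := Submodule.liftQ _ B hker with hT0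
  set T : LinearMap.range A →ₗ[ℂ] E :=
    T0.comp (A.quotKerEquivRange.symm.toLinearMap) with hT
  have hTval : ∀ (l : ι →₀ ℂ) (h : A l ∈ LinearMap.range A), T ⟨A l, h⟩ = B l := by
    intro l h
    have h1 : A.quotKerEquivRange.symm ⟨A l, h⟩ = (LinearMap.ker A).mkQ l :=
      A.quotKerEquivRange_symm_apply_image l h
    simp only [hT, LinearMap.comp_apply, LinearEquiv.coe_coe, h1, hT0,
      Submodule.mkQ_apply, Submodule.liftQ_apply]
  have hTnorm : ∀ u : LinearMap.range A, ‖T u‖ = ‖(u : E)‖ := by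
    rintro ⟨w, l, rfl⟩
    rw [hTval l ⟨l, rfl⟩]
    exact hnorm l
  set TL : LinearMap.range A →L[ℂ] E :=
    T.mkContinuous 1 (fun u => by rw [hTnorm u, one_mul]; exact le_rfl) with hTL
  have hd2 : Dense (LinearMap.range A : Set E) := by
    rw [hA, Finsupp.range_linearCombination]; exact hdense
  have hdr : DenseRange ((LinearMap.range A).subtypeL) := by
    have hr : Set.range ((LinearMap.range A).subtypeL) = (LinearMap.range A : Set E) :=
      Subtype.range_coe
    rw [DenseRange, hr]; exact hd2
  have hui : IsUniformInducing ((LinearMap.range A).subtypeL) :=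
    isometry_subtype_coe.isUniformInducing
  set U := TL.extend (LinearMap.range A).subtypeL with hU
  have hUA : ∀ l : ι →₀ ℂ, U (A l) = B l := by
    intro l
    have h1 := ContinuousLinearMap.extend_eq (f := TL) (e := (LinearMap.range A).subtypeL) hdr hui
      ⟨A l, ⟨l, rfl⟩⟩
    have h2 : TL ⟨A l, ⟨l, rfl⟩⟩ = B l := hTval l ⟨l, rfl⟩
    rw [← h2]
    exact h1
  refine ⟨U, ?_, ?_⟩
  · intro i
    have h1 : α i = A (Finsupp.single i 1) := by
      rw [hA, Finsupp.linearCombination_single, one_smul]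
    have h2 : β i = B (Finsupp.single i 1) := by
      rw [hB, Finsupp.linearCombination_single, one_smul]
    rw [h1, h2, hUA]
  · have h : (fun w => ‖U w‖) = fun w => ‖w‖ := by
      refine Continuous.ext_on hd2 (U.continuous.norm) continuous_norm ?_
      rintro w ⟨l, rfl⟩
      simp only
      rw [hUA l]
      exact hnorm l
    exact fun w => congrFun h w

/-- Local representation of `H` attached to a locally `H`-compatible
semigroup representation: given a symmetric set `V` of `τ`-fixed elements with
`π(S_V)H` total in `H`, there is a (strongly continuous, multiplicative, `*`-compatible)
map `π^H : V → U(H)` with `π(hs) = π^H(h) ∘ π(s)`, uniquely determined by this property. -/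
theorem stmt_6 {G : Type*} [Group G] [TopologicalSpace G] [IsTopologicalGroup G]
    {H : Type*} [NormedAddCommGroup H] [InnerProductSpace ℂ H] [CompleteSpace H]
    (τ : G →* G) (hτ_inv : Function.Involutive τ) (hτ_cont : Continuous τ)
    (S : Set G) (hS_open : IsOpen S)
    (hS_mul : ∀ a ∈ S, ∀ b ∈ S, a * b ∈ S)
    (hS_star : ∀ s ∈ S, (τ s)⁻¹ ∈ S)
    (π : G → H →L[ℂ] H)
    (hπ_mul : ∀ a ∈ S, ∀ b ∈ S, π (a * b) = π a ∘L π b)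
    (hπ_star : ∀ s ∈ S, π ((τ s)⁻¹) = ContinuousLinearMap.adjoint (π s))
    (hπ_cont : ∀ v : H, ContinuousOn (fun s => (π s) v) S)
    (V : Set G) (hV_symm : ∀ g ∈ V, g⁻¹ ∈ V) (hV_fix : ∀ g ∈ V, τ g = g)
    (hdense : Dense (↑(Submodule.span ℂ
      {w : H | ∃ s ∈ S, (∀ h ∈ V, h * s ∈ S) ∧ ∃ x : H, w = (π s) x}) : Set H)) :
    ∃ πH : G → H →L[ℂ] H,
      (∀ h ∈ V, πH h ∈ unitary (H →L[ℂ] H)) ∧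
      (∀ h ∈ V, ∀ s ∈ S, h * s ∈ S → π (h * s) = πH h ∘L π s) ∧
      (∀ v : H, ContinuousOn (fun h => (πH h) v) V) ∧
      (∀ g ∈ V, ∀ h ∈ V, g * h ∈ V → πH g ∘L πH h = πH (g * h)) ∧
      (∀ g ∈ V, ContinuousLinearMap.adjoint (πH g) = πH g⁻¹) ∧
      (∀ πH' : G → H →L[ℂ] H,
        (∀ h ∈ V, ∀ s ∈ S, h * s ∈ S → π (h * s) = πH' h ∘L π s) →
        ∀ h ∈ V, πH' h = πH h) := by
  classical
  set genS : Set H := {w : H | ∃ s ∈ S, (∀ h ∈ V, h * s ∈ S) ∧ ∃ x : H, w = (π s) x}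
    with hgenS
  -- the basic inner-product identity
  have hinner : ∀ s ∈ S, ∀ t ∈ S, ∀ x y : H,
      (inner ℂ (π s x) (π t y) : ℂ) = inner ℂ x (π ((τ s)⁻¹ * t) y) := by
    intro s hs t ht x y
    rw [hπ_mul _ (hS_star s hs) _ ht, ContinuousLinearMap.comp_apply, hπ_star s hs,
      ContinuousLinearMap.adjoint_inner_right]
  -- group computations
  have hgrp : ∀ h ∈ V, ∀ s t : G, (τ (h * s))⁻¹ * (h * t) = (τ s)⁻¹ * t := by
    intro h hh s t
    rw [map_mul, hV_fix h hh, mul_inv_rev, mul_assoc, inv_mul_cancel_left]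
  have hgrp2 : ∀ h ∈ V, ∀ s t : G, (τ (h⁻¹ * s))⁻¹ * t = (τ s)⁻¹ * (h * t) := by
    intro h hh s t
    rw [map_mul, map_inv, hV_fix h hh, mul_inv_rev, inv_inv, mul_assoc]
  have hgrp3 : ∀ h ∈ V, ∀ t r : G, (τ (h * t))⁻¹ * r = (τ t)⁻¹ * (h⁻¹ * r) := by
    intro h hh t r
    rw [map_mul, hV_fix h hh, mul_inv_rev, mul_assoc]
  -- indexing type for the generators
  let ι : Type _ := {q : G × H // q.1 ∈ S ∧ ∀ h ∈ V, h * q.1 ∈ S}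
  let α : ι → H := fun q => π q.1.1 q.1.2
  have hrange : Set.range α = genS := by
    ext w
    constructor
    · rintro ⟨⟨⟨s, x⟩, hs, hsV⟩, rfl⟩
      exact ⟨s, hs, hsV, x, rfl⟩
    · rintro ⟨s, hs, hsV, x, rfl⟩
      exact ⟨⟨⟨s, x⟩, hs, hsV⟩, rfl⟩
  have hdense' : Dense (Submodule.span ℂ (Set.range α) : Set H) := by
    rw [hrange]; exact hdense
  have hab : ∀ h ∈ V, ∀ i j : ι,
      (inner ℂ (π (h * i.1.1) i.1.2) (π (h * j.1.1) j.1.2) : ℂ) = inner ℂ (α i) (α j) := by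
    intro h hh i j
    rw [hinner _ (i.2.2 h hh) _ (j.2.2 h hh), hgrp h hh]
    exact (hinner _ i.2.1 _ j.2.1 i.1.2 j.1.2).symm
  have hex : ∀ h ∈ V, ∃ U : H →L[ℂ] H,
      (∀ i : ι, U (α i) = π (h * i.1.1) i.1.2) ∧ ∀ w, ‖U w‖ = ‖w‖ := fun h hh =>
    stmt6_exists_ext α (fun i => π (h * i.1.1) i.1.2) (hab h hh) hdense'
  let πH : G → H →L[ℂ] H := fun h => if hh : h ∈ V then (hex h hh).choose else 0
  have hgen : ∀ h, ∀ hh : h ∈ V, ∀ i : ι, πH h (α i) = π (h * i.1.1) i.1.2 := by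
    intro h hh i
    simp only [πH, dif_pos hh]
    exact (hex h hh).choose_spec.1 i
  have hnorm : ∀ h ∈ V, ∀ w, ‖πH h w‖ = ‖w‖ := by
    intro h hh w
    simp only [πH, dif_pos hh]
    exact (hex h hh).choose_spec.2 w
  have hgen' : ∀ h ∈ V, ∀ s, s ∈ S → (∀ g ∈ V, g * s ∈ S) → ∀ x : H,
      πH h (π s x) = π (h * s) x := fun h hh s hs hsV x => hgen h hh ⟨⟨s, x⟩, hs, hsV⟩
  -- the adjoint acts as expected on generators
  have hadj : ∀ h ∈ V, ∀ s, s ∈ S → (∀ g ∈ V, g * s ∈ S) → ∀ x : H,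
      (ContinuousLinearMap.adjoint (πH h)) (π s x) = π (h⁻¹ * s) x := by
    intro h hh s hs hsV x
    have hC : (innerSL ℂ (π s x)).comp (πH h) = innerSL ℂ (π (h⁻¹ * s) x) := by
      refine ContinuousLinearMap.ext_on hdense ?_
      rintro w ⟨t, ht, htV, y, rfl⟩
      simp only [ContinuousLinearMap.comp_apply, innerSL_apply_apply]
      rw [hgen' h hh t ht htV y, hinner s hs (h * t) (htV h hh) x y,
        hinner (h⁻¹ * s) (hsV h⁻¹ (hV_symm h hh)) t ht x y, hgrp2 h hh s t]
    refine ext_inner_right ℂ fun u => ?_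
    rw [ContinuousLinearMap.adjoint_inner_left]
    have h2 := ContinuousLinearMap.ext_iff.mp hC u
    simpa using h2
  -- the main covariance property
  have hmain : ∀ h ∈ V, ∀ t ∈ S, h * t ∈ S → ∀ y : H, πH h (π t y) = π (h * t) y := by
    intro h hh t ht hht y
    have hC : innerSL ℂ (πH h (π t y)) = innerSL ℂ (π (h * t) y) := by
      refine ContinuousLinearMap.ext_on hdense ?_
      rintro w ⟨r, hr, hrV, x, rfl⟩
      simp only [innerSL_apply_apply]
      have h1 : (inner ℂ (πH h (π t y)) (π r x) : ℂ) =
          inner ℂ (π t y) ((ContinuousLinearMap.adjoint (πH h)) (π r x)) :=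
        (ContinuousLinearMap.adjoint_inner_right (πH h) (π t y) (π r x)).symm
      rw [h1, hadj h hh r hr hrV x, hinner t ht (h⁻¹ * r) (hrV h⁻¹ (hV_symm h hh)) y x,
        hinner (h * t) hht r hr y x, hgrp3 h hh t r]
    refine ext_inner_right ℂ fun u => ?_
    have h2 := ContinuousLinearMap.ext_iff.mp hC u
    simpa using h2
  have hmul : ∀ h ∈ V, ∀ s ∈ S, h * s ∈ S → π (h * s) = πH h ∘L π s := by
    intro h hh s hs hhs
    ext y
    simp only [ContinuousLinearMap.comp_apply]
    exact (hmain h hh s hs hhs y).symm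
  have hstar : ∀ g ∈ V, ContinuousLinearMap.adjoint (πH g) = πH g⁻¹ := by
    intro g hg
    refine ContinuousLinearMap.ext_on hdense ?_
    rintro w ⟨s, hs, hsV, x, rfl⟩
    rw [hadj g hg s hs hsV x, hgen' g⁻¹ (hV_symm g hg) s hs hsV x]
  have huni : ∀ h ∈ V, πH h ∈ unitary (H →L[ℂ] H) := by
    intro h hh
    have hleft : πH h⁻¹ ∘L πH h = 1 := by
      refine ContinuousLinearMap.ext_on hdense ?_
      rintro w ⟨s, hs, hsV, x, rfl⟩
      simp only [ContinuousLinearMap.comp_apply, ContinuousLinearMap.one_apply]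
      rw [hgen' h hh s hs hsV x,
        hmain h⁻¹ (hV_symm h hh) (h * s) (hsV h hh)
          (by rw [inv_mul_cancel_left]; exact hs) x, inv_mul_cancel_left]
    have hright : πH h ∘L πH h⁻¹ = 1 := by
      refine ContinuousLinearMap.ext_on hdense ?_
      rintro w ⟨s, hs, hsV, x, rfl⟩
      simp only [ContinuousLinearMap.comp_apply, ContinuousLinearMap.one_apply]
      rw [hgen' h⁻¹ (hV_symm h hh) s hs hsV x,
        hmain h hh (h⁻¹ * s) (hsV h⁻¹ (hV_symm h hh))
          (by rw [mul_inv_cancel_left]; exact hs) x, mul_inv_cancel_left]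
    rw [Unitary.mem_iff]
    constructor
    · rw [ContinuousLinearMap.star_eq_adjoint, hstar h hh]
      exact hleft
    · rw [ContinuousLinearMap.star_eq_adjoint, hstar h hh]
      exact hright
  have hmulV : ∀ g ∈ V, ∀ h ∈ V, g * h ∈ V → πH g ∘L πH h = πH (g * h) := by
    intro g hg h hh hgh
    refine ContinuousLinearMap.ext_on hdense ?_
    rintro w ⟨s, hs, hsV, x, rfl⟩
    simp only [ContinuousLinearMap.comp_apply]
    have hhs : h * s ∈ S := hsV h hh
    have hghs : g * (h * s) ∈ S := by
      rw [← mul_assoc]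
      exact hsV (g * h) hgh
    rw [hgen' h hh s hs hsV x, hgen' (g * h) hgh s hs hsV x,
      hmain g hg (h * s) hhs hghs x, ← mul_assoc]
  -- strong continuity on the dense span
  have hcontM : ∀ w ∈ Submodule.span ℂ genS, ContinuousOn (fun h => πH h w) V := by
    intro w hw
    induction hw using Submodule.span_induction with
    | mem w hw =>
      obtain ⟨s, hs, hsV, x, rfl⟩ := hw
      have hc : ContinuousOn ((fun g : G => π g x) ∘ fun h : G => h * s) V :=
        (hπ_cont x).comp (continuous_mul_right s).continuousOn fun h hh => hsV h hh
      refine hc.congr fun h hh => ?_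
      exact hgen' h hh s hs hsV x
    | zero =>
      simp only [map_zero]
      exact continuousOn_const
    | add u v hu hv hcu hcv =>
      refine (hcu.add hcv).congr fun h hh => ?_
      simp
    | smul a u hu hcu =>
      refine (hcu.const_smul a).congr fun h hh => ?_
      simp
  have hcont : ∀ v : H, ContinuousOn (fun h => πH h v) V := by
    intro v h₀ hh₀
    show Filter.Tendsto (fun h => πH h v) (nhdsWithin h₀ V) (nhds (πH h₀ v))
    refine Metric.tendsto_nhds.mpr fun ε hε => ?_
    have hε3 : 0 < ε / 3 := by linarith
    obtain ⟨u, hu_mem, hu⟩ : ∃ u ∈ (Submodule.span ℂ genS : Set H), dist v u < ε / 3 :=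
      Metric.mem_closure_iff.mp (hdense v) (ε / 3) hε3
    have hC := hcontM u hu_mem h₀ hh₀
    have hev : ∀ᶠ h in nhdsWithin h₀ V, dist (πH h u) (πH h₀ u) < ε / 3 :=
      Metric.tendsto_nhds.mp hC (ε / 3) hε3
    filter_upwards [hev, self_mem_nhdsWithin] with h hd hhV
    have e1 : dist (πH h v) (πH h u) < ε / 3 := by
      rw [dist_eq_norm, ← map_sub, hnorm h hhV, ← dist_eq_norm]
      exact hu
    have e3 : dist (πH h₀ u) (πH h₀ v) < ε / 3 := by
      rw [dist_eq_norm, ← map_sub, hnorm h₀ hh₀, ← dist_eq_norm, dist_comm]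
      exact hu
    calc dist (πH h v) (πH h₀ v) ≤
        dist (πH h v) (πH h u) + dist (πH h u) (πH h₀ u) + dist (πH h₀ u) (πH h₀ v) :=
          dist_triangle4 _ _ _ _
      _ < ε / 3 + ε / 3 + ε / 3 := by linarith
      _ = ε := by ring
  refine ⟨πH, huni, hmul, hcont, hmulV, hstar, ?_⟩
  intro πH' hπH' h hh
  refine ContinuousLinearMap.ext_on hdense ?_
  rintro w ⟨s, hs, hsV, x, rfl⟩
  have h1 := ContinuousLinearMap.ext_iff.mp (hπH' h hh s hs (hsV h hh)) x
  simp only [ContinuousLinearMap.comp_apply] at h1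
  rw [← h1, hgen' h hh s hs hsV x]
end

section
/- Let G be a topological group with an involutive automorphism τ, g* := τ(g)⁻¹, S ⊆ G an open *-subsemigroup, and π : S → B(H) a *-representation on a complex Hilbert space H. Define S_reg := {s ∈ S : π(s) is injective and π(s) has dense range}. Then S_reg is an open subset of G, is closed under multiplication, and satisfies (S_reg)* = S_reg; i.e. S_reg is an open *-subsemigroup of S. -/
open ContinuousLinearMap in
private lemma adj_inj_of_dense {H : Type*} [NormedAddCommGroup H] [InnerProductSpace ℂ H]
    [CompleteSpace H] {A : H →L[ℂ] H} (h : DenseRange ⇑A) :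
    Function.Injective ⇑(ContinuousLinearMap.adjoint A) := by
  intro x y hxy
  have hz : ContinuousLinearMap.adjoint A (x - y) = 0 := by rw [map_sub, hxy, sub_self]
  have key : (fun v : H => (inner ℂ v (x - y) : ℂ)) = fun _ => (0 : ℂ) := by
    refine Continuous.ext_on h ?_ continuous_const ?_
    · exact continuous_id.inner continuous_const
    · rintro _ ⟨w, rfl⟩
      show (inner ℂ (A w) (x - y) : ℂ) = 0
      rw [← ContinuousLinearMap.adjoint_inner_right, hz, inner_zero_right]
  have : (inner ℂ (x - y) (x - y) : ℂ) = 0 := congrFun key (x - y)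
  rw [inner_self_eq_zero, sub_eq_zero] at this
  exact this

open ContinuousLinearMap in
private lemma adj_dense_of_inj {H : Type*} [NormedAddCommGroup H] [InnerProductSpace ℂ H]
    [CompleteSpace H] {A : H →L[ℂ] H} (h : Function.Injective ⇑A) :
    DenseRange ⇑(ContinuousLinearMap.adjoint A) := by
  set B := ContinuousLinearMap.adjoint A with hB
  set K : Submodule ℂ H := LinearMap.range (B : H →ₗ[ℂ] H) with hK
  have horth : Kᗮ = ⊥ := by
    rw [Submodule.eq_bot_iff]
    intro x hx
    have hAx : A x = 0 := by
      have h1 : (inner ℂ (B (A x)) x : ℂ) = 0 := hx _ ⟨A x, rfl⟩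
      rw [ContinuousLinearMap.adjoint_inner_left] at h1
      exact inner_self_eq_zero.mp h1
    exact h (by rw [hAx, map_zero])
  have hclos : K.topologicalClosure = ⊤ := by
    rw [← Submodule.orthogonal_orthogonal_eq_closure, horth, Submodule.bot_orthogonal_eq_top]
  have hdense : Dense (K : Set H) := Submodule.dense_iff_topologicalClosure_eq_top.mpr hclos
  have hrange : (K : Set H) = Set.range ⇑B := by
    ext v; simp [hK, LinearMap.mem_range]
  rwa [DenseRange, ← hrange]

/-- The set `S_reg` of elements `s ∈ S` for which `π(s)` is injective with
dense range is an open `*`-subsemigroup of `S`. -/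
theorem stmt_8 {G : Type*} [Group G] [TopologicalSpace G] [IsTopologicalGroup G]
    {H : Type*} [NormedAddCommGroup H] [InnerProductSpace ℂ H] [CompleteSpace H]
    (τ : G →* G) (hτ_inv : Function.Involutive τ)
    (S : Set G) (hS_open : IsOpen S)
    (hS_mul : ∀ a ∈ S, ∀ b ∈ S, a * b ∈ S)
    (hS_star : ∀ s ∈ S, (τ s)⁻¹ ∈ S)
    (π : G → H →L[ℂ] H)
    (hπ_mul : ∀ a ∈ S, ∀ b ∈ S, π (a * b) = π a ∘L π b)
    (hπ_star : ∀ s ∈ S, π ((τ s)⁻¹) = ContinuousLinearMap.adjoint (π s))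
    (Sreg : Set G)
    (hSreg : Sreg = {s | s ∈ S ∧ Function.Injective ⇑(π s) ∧ DenseRange ⇑(π s)}) :
    IsOpen Sreg ∧
    (∀ a ∈ Sreg, ∀ b ∈ Sreg, a * b ∈ Sreg) ∧
    (∀ s ∈ Sreg, (τ s)⁻¹ ∈ Sreg) := by
  subst hSreg
  -- closure under multiplication
  have hmul : ∀ a ∈ {s | s ∈ S ∧ Function.Injective ⇑(π s) ∧ DenseRange ⇑(π s)},
      ∀ b ∈ {s | s ∈ S ∧ Function.Injective ⇑(π s) ∧ DenseRange ⇑(π s)},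
      a * b ∈ {s | s ∈ S ∧ Function.Injective ⇑(π s) ∧ DenseRange ⇑(π s)} := by
    rintro a ⟨haS, hai, had⟩ b ⟨hbS, hbi, hbd⟩
    refine ⟨hS_mul a haS b hbS, ?_, ?_⟩
    · rw [hπ_mul a haS b hbS, ContinuousLinearMap.coe_comp']
      exact hai.comp hbi
    · rw [hπ_mul a haS b hbS, ContinuousLinearMap.coe_comp']
      exact had.comp hbd (π a).continuous
  refine ⟨?_, hmul, ?_⟩
  · -- openness
    rw [isOpen_iff_forall_mem_open]
    rintro s ⟨hsS, hsi, hsd⟩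
    refine ⟨S ∩ {t | t⁻¹ * (s * (s * s)) ∈ S} ∩ {t | (s * (s * s)) * t⁻¹ ∈ S}, ?_, ?_, ⟨hsS, ?_⟩, ?_⟩
    · -- contained in Sreg
      rintro t ⟨⟨htS, hu⟩, hv⟩
      have hs3 : s * (s * s) ∈ {s | s ∈ S ∧ Function.Injective ⇑(π s) ∧ DenseRange ⇑(π s)} :=
        hmul s ⟨hsS, hsi, hsd⟩ (s * s) (hmul s ⟨hsS, hsi, hsd⟩ s ⟨hsS, hsi, hsd⟩)
      obtain ⟨hs3S, hs3i, hs3d⟩ := hs3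
      have htu : t * (t⁻¹ * (s * (s * s))) = s * (s * s) := by group
      have hvt : ((s * (s * s)) * t⁻¹) * t = s * (s * s) := by group
      refine ⟨htS, ?_, ?_⟩
      · -- injective : π(s³) = π(v) ∘ π(t)
        have := hπ_mul _ hv t htS
        rw [hvt] at this
        rw [this, ContinuousLinearMap.coe_comp'] at hs3i
        exact Function.Injective.of_comp hs3i
      · -- dense range : π(s³) = π(t) ∘ π(u)
        have := hπ_mul t htS _ hu
        rw [htu] at this
        rw [this, ContinuousLinearMap.coe_comp'] at hs3d
        exact hs3d.mono (Set.range_comp_subset_range _ _)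
    · exact (hS_open.inter ((hS_open.preimage (continuous_inv.mul continuous_const)))).inter
        (hS_open.preimage (continuous_const.mul continuous_inv))
    · show s⁻¹ * (s * (s * s)) ∈ S
      have : s⁻¹ * (s * (s * s)) = s * s := by group
      rw [this]; exact hS_mul s hsS s hsS
    · show (s * (s * s)) * s⁻¹ ∈ S
      have : (s * (s * s)) * s⁻¹ = s * s := by group
      rw [this]; exact hS_mul s hsS s hsS
  · -- closure under star
    rintro s ⟨hsS, hsi, hsd⟩
    refine ⟨hS_star s hsS, ?_, ?_⟩
    · rw [hπ_star s hsS]; exact adj_inj_of_dense hsd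
    · rw [hπ_star s hsS]; exact adj_dense_of_inj hsi
end

section
/- Let G be a topological group and let S, T ⊆ G be open subsemigroups with T ⊆ S. If T is dense in S and the identity element 1 lies in the closure of T, then S = T. -/
/-- If `S, T` are open subsemigroups of a topological group `G` with
`T ⊆ S`, `T` dense in `S`, and `1 ∈ closure T`, then `S = T`. -/
theorem stmt_12 {G : Type*} [Group G] [TopologicalSpace G] [IsTopologicalGroup G]
    (S T : Set G) (hS_open : IsOpen S) (hT_open : IsOpen T)
    (hS_mul : ∀ a ∈ S, ∀ b ∈ S, a * b ∈ S)
    (hT_mul : ∀ a ∈ T, ∀ b ∈ T, a * b ∈ T)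
    (hTS : T ⊆ S) (hdense : S ⊆ closure T) (hone : (1 : G) ∈ closure T) :
    S = T := by
  have key : ∀ x ∈ closure T, ∀ t ∈ T, x * t ∈ T := by
    intro x hx t ht
    have hWopen : IsOpen ((fun u => u⁻¹ * (x * t)) ⁻¹' T) :=
      hT_open.preimage (by continuity)
    have hxW : x ∈ (fun u => u⁻¹ * (x * t)) ⁻¹' T := by
      simp only [Set.mem_preimage]
      rw [show x⁻¹ * (x * t) = t by group]
      exact ht
    obtain ⟨u, huW, huT⟩ := mem_closure_iff.mp hx _ hWopen hxW
    have : u * (u⁻¹ * (x * t)) ∈ T := hT_mul u huT _ huW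
    rwa [show u * (u⁻¹ * (x * t)) = x * t by group] at this
  apply Set.Subset.antisymm _ hTS
  intro s hs
  have hVopen : IsOpen ((fun u => s * u⁻¹) ⁻¹' S) :=
    hS_open.preimage (by continuity)
  have h1V : (1 : G) ∈ (fun u => s * u⁻¹) ⁻¹' S := by
    simp only [Set.mem_preimage, inv_one, mul_one]
    exact hs
  obtain ⟨t, htV, htT⟩ := mem_closure_iff.mp hone _ hVopen h1V
  have hst : s * t⁻¹ ∈ closure T := hdense htV
  have := key _ hst t htT
  rwa [show s * t⁻¹ * t = s by group] at this
end

section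
/- Let G be a topological group with a continuous involutive automorphism τ, g* := τ(g)⁻¹, S ⊆ G an open *-subsemigroup, and π : S → B(H) a strongly continuous non-degenerate *-representation on a complex Hilbert space H. Suppose there exists a continuous map c : (0,∞) → G with c(s+t) = c(s)c(t) for all s,t > 0, c(t) ∈ S and c(t)* = c(t) for all t > 0, and c(t) → 1 as t → 0⁺. Then there exists a symmetric open neighborhood B of 1 in G (B⁻¹ = B) such that span{π(s)v : s ∈ S_B, v ∈ H} is dense in H, where S_B := {s ∈ S : ∀b ∈ B, bs ∈ S}. -/
open scoped ComplexInnerProductSpace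

/-- If a vector is orthogonal to every element of a set, it lies in the orthogonal
complement of the span of that set. -/
lemma mem_orthogonal_span_of_forall {H : Type*} [NormedAddCommGroup H]
    [InnerProductSpace ℂ H] {M : Set H} {w : H}
    (h : ∀ m ∈ M, ⟪m, w⟫ = 0) : w ∈ (Submodule.span ℂ M)ᗮ := by
  rw [Submodule.mem_orthogonal]
  intro u hu
  induction hu using Submodule.span_induction with
  | mem x hx => exact h x hx
  | zero => simp
  | add x y _ _ hx hy => simp [inner_add_left, hx, hy]
  | smul c x _ hx => simp [inner_smul_left, hx]

/-- Under the hypotheses of Statement 13 (existence of a continuous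
one-parameter semigroup of symmetric elements in `S` tending to `1`), every strongly
continuous non-degenerate `*`-representation of `S` is locally `H`-compatible: there is a
symmetric open `1`-neighborhood `B ⊆ G` such that `π(S_B)H` spans a dense subspace of `H`. -/
theorem stmt_14 {G : Type*} [Group G] [TopologicalSpace G] [IsTopologicalGroup G]
    {H : Type*} [NormedAddCommGroup H] [InnerProductSpace ℂ H] [CompleteSpace H]
    (τ : G →* G) (hτ_inv : Function.Involutive τ) (hτ_cont : Continuous τ)
    (S : Set G) (hS_open : IsOpen S)
    (hS_mul : ∀ a ∈ S, ∀ b ∈ S, a * b ∈ S)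
    (hS_star : ∀ s ∈ S, (τ s)⁻¹ ∈ S)
    (π : G → H →L[ℂ] H)
    (hπ_mul : ∀ a ∈ S, ∀ b ∈ S, π (a * b) = π a ∘L π b)
    (hπ_star : ∀ s ∈ S, π ((τ s)⁻¹) = ContinuousLinearMap.adjoint (π s))
    (hπ_cont : ∀ v : H, ContinuousOn (fun s => (π s) v) S)
    (hπ_nd : Dense (↑(Submodule.span ℂ
      {w : H | ∃ s ∈ S, ∃ v : H, w = (π s) v}) : Set H))
    (cc : ℝ → G) (hcc_cont : ContinuousOn cc (Set.Ioi (0:ℝ)))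
    (hcc_mul : ∀ s > (0:ℝ), ∀ t > (0:ℝ), cc (s + t) = cc s * cc t)
    (hcc_S : ∀ t > (0:ℝ), cc t ∈ S)
    (hcc_sym : ∀ t > (0:ℝ), (τ (cc t))⁻¹ = cc t)
    (hcc_lim : Filter.Tendsto cc (nhdsWithin 0 (Set.Ioi (0:ℝ))) (nhds (1 : G))) :
    ∃ B : Set G, IsOpen B ∧ (1 : G) ∈ B ∧ (∀ g ∈ B, g⁻¹ ∈ B) ∧
      Dense (↑(Submodule.span ℂ
        {w : H | ∃ s ∈ S, (∀ b ∈ B, b * s ∈ S) ∧ ∃ v : H, w = (π s) v}) : Set H) := by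
  classical
  -- self-adjointness of π (cc t)
  have hsa : ∀ t > (0:ℝ), ContinuousLinearMap.adjoint (π (cc t)) = π (cc t) := by
    intro t ht
    have := hπ_star (cc t) (hcc_S t ht)
    rw [hcc_sym t ht] at this
    exact this.symm
  -- the orthogonal complement of the nondegeneracy span is ⊥
  have hbot : (Submodule.span ℂ {w : H | ∃ s ∈ S, ∃ v : H, w = (π s) v})ᗮ = ⊥ := by
    rw [← Submodule.topologicalClosure_eq_top_iff]
    exact Submodule.dense_iff_topologicalClosure_eq_top.mp hπ_nd
  have perp_zero : ∀ w : H, (∀ s ∈ S, ∀ v : H, ⟪(π s) v, w⟫ = 0) → w = 0 := by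
    intro w hw
    have : w ∈ (Submodule.span ℂ {w : H | ∃ s ∈ S, ∃ v : H, w = (π s) v})ᗮ := by
      apply mem_orthogonal_span_of_forall
      rintro m ⟨s, hs, v, rfl⟩
      exact hw s hs v
    rw [hbot] at this
    exact Submodule.mem_bot ℂ |>.mp this
  -- the neighborhood B
  refine ⟨{g : G | g * cc 1 ∈ S ∧ g⁻¹ * cc 1 ∈ S}, ?_, ?_, ?_, ?_⟩
  · exact ((hS_open.preimage (continuous_mul_right (cc 1))).inter
      (hS_open.preimage (continuous_inv.mul continuous_const)))
  · constructor <;> simpa using hcc_S 1 one_pos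
  · rintro g ⟨h1, h2⟩
    exact ⟨h2, by simpa using h1⟩
  -- density
  set B : Set G := {g : G | g * cc 1 ∈ S ∧ g⁻¹ * cc 1 ∈ S} with hB
  set M : Set H := {w : H | ∃ s ∈ S, (∀ b ∈ B, b * s ∈ S) ∧ ∃ v : H, w = (π s) v} with hM
  rw [Submodule.dense_iff_topologicalClosure_eq_top,
    Submodule.topologicalClosure_eq_top_iff, eq_bot_iff]
  intro w hw
  rw [Submodule.mem_bot]
  -- generators are orthogonal to w
  have hw0 : ∀ s ∈ S, (∀ b ∈ B, b * s ∈ S) → ∀ v : H, ⟪(π s) v, w⟫ = 0 := by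
    intro s hs hsB v
    exact (Submodule.mem_orthogonal _ w).mp hw _
      (Submodule.subset_span ⟨s, hs, hsB, v, rfl⟩)
  -- Step 1: for t ≥ 1 and s ∈ S, cc t * s ∈ S_B
  have key1 : ∀ t : ℝ, 1 ≤ t → ∀ s ∈ S, ∀ b ∈ B, b * (cc t * s) ∈ S := by
    intro t ht s hs b hb
    rcases eq_or_lt_of_le ht with h | h
    · rw [← h, ← mul_assoc]
      exact hS_mul _ hb.1 _ hs
    · have h1 : cc t = cc 1 * cc (t - 1) := by
        have := hcc_mul 1 one_pos (t - 1) (by linarith)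
        simpa using this
      rw [h1]
      have : b * (cc 1 * cc (t - 1) * s) = (b * cc 1) * (cc (t - 1) * s) := by group
      rw [this]
      exact hS_mul _ hb.1 _ (hS_mul _ (hcc_S _ (by linarith)) _ hs)
  -- Step 2: π (cc t) w = 0 for t ≥ 1
  have step2 : ∀ t : ℝ, 1 ≤ t → (π (cc t)) w = 0 := by
    intro t ht
    have htpos : (0:ℝ) < t := lt_of_lt_of_le one_pos ht
    apply perp_zero
    intro s hs v
    have h1 : ⟪(π s) v, (π (cc t)) w⟫ = ⟪(π (cc t)) ((π s) v), w⟫ := by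
      conv_lhs => rw [← hsa t htpos]
      rw [ContinuousLinearMap.adjoint_inner_right]
    rw [h1]
    have h2 : (π (cc t)) ((π s) v) = (π (cc t * s)) v := by
      rw [hπ_mul _ (hcc_S t htpos) _ hs]; rfl
    rw [h2]
    exact hw0 _ (hS_mul _ (hcc_S t htpos) _ hs) (key1 t ht s hs) v
  -- halving: π (cc (2t)) w = 0 → π (cc t) w = 0
  have halve : ∀ t : ℝ, 0 < t → (π (cc (2 * t))) w = 0 → (π (cc t)) w = 0 := by
    intro t ht h2
    have hsq : (π (cc t)) ((π (cc t)) w) = (π (cc (2 * t))) w := by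
      have : cc (2 * t) = cc t * cc t := by
        rw [two_mul]; exact hcc_mul t ht t ht
      rw [this, hπ_mul _ (hcc_S t ht) _ (hcc_S t ht)]; rfl
    have : ⟪(π (cc t)) w, (π (cc t)) w⟫ = 0 := by
      calc ⟪(π (cc t)) w, (π (cc t)) w⟫
          = ⟪(π (cc t)) w, (ContinuousLinearMap.adjoint (π (cc t))) w⟫ := by
            rw [hsa t ht]
        _ = ⟪(π (cc t)) ((π (cc t)) w), w⟫ :=
            ContinuousLinearMap.adjoint_inner_right _ _ _
        _ = 0 := by rw [hsq, h2, inner_zero_left]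
    exact inner_self_eq_zero.mp this
  -- Step 3: π (cc t) w = 0 for all t > 0
  have step3 : ∀ t : ℝ, 0 < t → (π (cc t)) w = 0 := by
    have ind : ∀ n : ℕ, ∀ t : ℝ, 0 < t → (π (cc ((2:ℝ) ^ n * t))) w = 0 →
        (π (cc t)) w = 0 := by
      intro n
      induction n with
      | zero => intro t ht h; simpa using h
      | succ n ih =>
        intro t ht h
        apply halve t ht
        apply ih (2 * t) (by linarith)
        have : (2:ℝ) ^ n * (2 * t) = (2:ℝ) ^ (n + 1) * t := by ring
        rw [this]
        exact h
    intro t ht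
    obtain ⟨n, hn⟩ := pow_unbounded_of_one_lt (1 / t) (one_lt_two (α := ℝ))
    apply ind n t ht
    apply step2
    have := (div_lt_iff₀ ht).mp hn
    linarith
  -- Step 4: w is orthogonal to all π s v, s ∈ S
  apply perp_zero
  intro s hs v
  -- t ↦ cc t * s tends to s within S
  have htend : Filter.Tendsto (fun t : ℝ => cc t * s)
      (nhdsWithin 0 (Set.Ioi (0:ℝ))) (nhdsWithin s S) := by
    rw [tendsto_nhdsWithin_iff]
    constructor
    · have := hcc_lim.mul_const s
      simpa using this
    · filter_upwards [self_mem_nhdsWithin] with t ht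
      exact hS_mul _ (hcc_S t ht) _ hs
  have hcont : Filter.Tendsto (fun t : ℝ => (π (cc t * s)) v)
      (nhdsWithin 0 (Set.Ioi (0:ℝ))) (nhds ((π s) v)) :=
    (hπ_cont v s hs).tendsto.comp htend
  have hinner : Filter.Tendsto (fun t : ℝ => ⟪(π (cc t * s)) v, w⟫)
      (nhdsWithin 0 (Set.Ioi (0:ℝ))) (nhds ⟪(π s) v, w⟫) :=
    hcont.inner tendsto_const_nhds
  have hzero : ∀ t ∈ Set.Ioi (0:ℝ), ⟪(π (cc t * s)) v, w⟫ = 0 := by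
    intro t ht
    have h2 : (π (cc t * s)) v = (π (cc t)) ((π s) v) := by
      rw [hπ_mul _ (hcc_S t ht) _ hs]; rfl
    rw [h2]
    conv_lhs => rw [← hsa t ht]
    rw [ContinuousLinearMap.adjoint_inner_left, step3 t ht, inner_zero_right]
  have hzero' : Filter.Tendsto (fun t : ℝ => ⟪(π (cc t * s)) v, w⟫)
      (nhdsWithin 0 (Set.Ioi (0:ℝ))) (nhds 0) := by
    apply Filter.Tendsto.congr' _ (tendsto_const_nhds (x := (0:ℂ)))
    filter_upwards [self_mem_nhdsWithin] with t ht
    exact (hzero t ht).symm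
  exact tendsto_nhds_unique hinner hzero'
end
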